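/- Let (Ω, 𝒢, P) be a probability space, T ∈ (0,∞], I a set, and (𝒜, (𝔽^A)_{A∈𝒜}) an index system on I with filtrations of sub-σ-algebras of 𝒢. Let δ = (δ^A)_{A∈𝒜} be a family of information delays, each δ^A an information delay for 𝔽^A, and let (𝓕^{A,δ}_t) be the recursively defined δ-delayed filtrations. Then the delayed filtration is coarser than the original: for every A ∈ 𝒜 and every t ∈ [0,T], 𝓕^{A,δ}_t ⊆ 𝓕^A_t. -/
import Mathlib


open MeasureTheory Set Filter
open scoped ENNReal NNReal

noncomputable section

/-- The σ-field of the `τ`-past: generated by the sets `A` such that `A ∩ {τ ≤ s}` is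
`F s`-measurable for every time `s` in the time domain `D` of the filtration `F`.
(When `τ` is a stopping time this family is itself a σ-algebra.) -/
def pastSigma {Ω ι : Type*} [Preorder ι] (F : ι → MeasurableSpace Ω) (D : Set ι)
    (τ : Ω → ι) : MeasurableSpace Ω :=
  MeasurableSpace.generateFrom {A | ∀ s ∈ D, MeasurableSet[F s] (A ∩ {ω | τ ω ≤ s})}

/-- An information delay for the filtration `F = (F t)_{t ∈ [0,T]}`: each `δ t` is an
`F`-stopping time, `0 ≤ δ t ω ≤ t`, and `δ` is pathwise monotone. -/
def IsInformationDelay {Ω : Type*} (F : ℝ≥0∞ → MeasurableSpace Ω) (T : ℝ≥0∞)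
    (δ : ℝ≥0∞ → Ω → ℝ≥0∞) : Prop :=
  (∀ t ≤ T, ∀ s ≤ T, MeasurableSet[F s] {ω | δ t ω ≤ s}) ∧
  (∀ t ≤ T, ∀ ω, δ t ω ≤ t) ∧
  (∀ t u : ℝ≥0∞, t ≤ u → u ≤ T → ∀ ω, δ t ω ≤ δ u ω)

/-- The recursively defined `δ`-delayed filtrations:
`𝓕^{A,δ}_t = σ(𝓕^A_{δ^A(t)} ∪ ⋃ {𝓕^{A',δ}_t : A' ∈ 𝒜, A' ⊊ A})`. -/
def delayedFiltration {Ω I : Type*} (F : Finset I → ℝ≥0∞ → MeasurableSpace Ω)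
    (T : ℝ≥0∞) (𝒜 : Set (Finset I)) (δ : Finset I → ℝ≥0∞ → Ω → ℝ≥0∞)
    (A : Finset I) (t : ℝ≥0∞) : MeasurableSpace Ω :=
  pastSigma (F A) (Set.Iic T) (δ A t) ⊔
    ⨆ (A' : Finset I) (_ : A' ∈ 𝒜) (_ : A' ⊂ A), delayedFiltration F T 𝒜 δ A' t
termination_by A.card
decreasing_by exact Finset.card_lt_card ‹A' ⊂ A›

/-- The `δ`-delayed filtration is coarser than the original:
`𝓕^{A,δ}_t ⊆ 𝓕^A_t` for every `A ∈ 𝒜` and `t ∈ [0,T]`. -/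
theorem delayedFiltration_le
    {Ω I : Type*} [DecidableEq I] [m𝒢 : MeasurableSpace Ω]
    (P : Measure Ω) [IsProbabilityMeasure P]
    (T : ℝ≥0∞) (hT : 0 < T)
    (𝒜 : Set (Finset I)) (h𝒜 : ∀ A₁ ∈ 𝒜, ∀ A₂ ∈ 𝒜, A₁ ∪ A₂ ∈ 𝒜)
    (F : Finset I → ℝ≥0∞ → MeasurableSpace Ω)
    (hFfilt : ∀ A ∈ 𝒜, ∀ s t : ℝ≥0∞, s ≤ t → t ≤ T → F A s ≤ F A t)
    (hFle : ∀ A ∈ 𝒜, ∀ t ≤ T, F A t ≤ m𝒢)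
    (hFmono : ∀ A ∈ 𝒜, ∀ A' ∈ 𝒜, A ⊆ A' → ∀ t ≤ T, F A t ≤ F A' t)
    (δ : Finset I → ℝ≥0∞ → Ω → ℝ≥0∞)
    (hδ : ∀ A ∈ 𝒜, IsInformationDelay (F A) T (δ A)) :
    ∀ A ∈ 𝒜, ∀ t ≤ T, delayedFiltration F T 𝒜 δ A t ≤ F A t := by
  intro A
  induction A using Finset.strongInduction with
  | _ A ih =>
    intro hA t ht
    rw [delayedFiltration]
    apply sup_le
    · apply MeasurableSpace.generateFrom_le
      intro S hS
      have h := hS t (Set.mem_Iic.mpr ht)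
      have hset : S ∩ {ω | δ A t ω ≤ t} = S := by
        ext ω; simp [(hδ A hA).2.1 t ht ω]
      rwa [hset] at h
    · refine iSup_le fun A' => iSup_le fun hA' => iSup_le fun hsub => ?_
      exact le_trans (ih A' hsub hA' t ht) (hFmono A' hA' A hA hsub.subset t ht)
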